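/- arXiv:1512.06233 — 2 statements merged into one kernel-verified Lean document; each statement's English description precedes it below -/
import Mathlib

section
/- The tensor product of processes is injective up to failures equivalence: if P₁ ⊗ P₂ ≈_f Q₁ ⊗ Q₂ then P₁ ≈_f Q₁ and P₂ ≈_f Q₂. -/
set_option linter.unnecessarySeqFocus false

/-! # CCS with simultaneous actions (Abramsky, "Process Realizability") -/

/-- Labels: names (`inl`) and co-names (`inr`). -/
abbrev Label : Type := ℕ ⊕ ℕ

/-- The involution `λ ↦ λ̄` exchanging names and co-names. -/
def Label.bar : Label → Label
  | .inl n => .inr n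
  | .inr n => .inl n

/-- Actions: finite sets of labels, performed simultaneously.  `τ = ∅`. -/
abbrev Act : Type := Finset Label

/-- A renaming: a partial injective function on labels preserving the involution. -/
structure Renaming where
  toFun : Label → Option Label
  inj : ∀ ⦃x y z : Label⦄, toFun x = some z → toFun y = some z → x = y
  bar : ∀ x : Label, toFun (Label.bar x) = (toFun x).map Label.bar

/-- The pointwise extension of a renaming to actions. -/
def Renaming.onAction (f : Renaming) (a : Act) : Act :=
  a.filterMap f.toFun (fun _ _ _ hx hy => f.inj (Option.mem_def.mp hx) (Option.mem_def.mp hy))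

/-- Guarded process terms of CCS with simultaneous actions:
prefix, countably-indexed guarded sums (all guards non-`τ`), parallel composition,
restriction, renaming, process variables (de Bruijn) and recursion. -/
inductive Proc : Type where
  | pre (a : Act) (P : Proc)
  | sum (I : Set ℕ) (act : ℕ → Act) (cont : ℕ → Proc) (hg : ∀ n ∈ I, (act n).Nonempty)
  | par (P Q : Proc)
  | restrict (P : Proc) (L : Set Label)
  | rename (P : Proc) (f : Renaming)
  | var (n : ℕ)
  | fix (P : Proc)

/-- The inactive process `0` (the empty sum). -/
def Proc.nil : Proc := .sum ∅ (fun _ => ∅) (fun _ => .var 0) (by simp)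

/-- Substitution of a process for the variable with de Bruijn index `d`. -/
def Proc.subst (R : Proc) : ℕ → Proc → Proc
  | d, .pre a P => .pre a (Proc.subst R d P)
  | d, .sum I act cont hg => .sum I act (fun n => Proc.subst R d (cont n)) hg
  | d, .par P Q => .par (Proc.subst R d P) (Proc.subst R d Q)
  | d, .restrict P L => .restrict (Proc.subst R d P) L
  | d, .rename P f => .rename (Proc.subst R d P) f
  | d, .var n => if n = d then R else .var n
  | d, .fix P => .fix (Proc.subst R (d + 1) P)

/-- The labelled transition relation, with the generalized synchronization rule
for simultaneous (compound) actions. -/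
inductive Step : Proc → Act → Proc → Prop where
  | pre {a P} : Step (.pre a P) a P
  | sum {I act cont hg} (j : ℕ) (hj : j ∈ I) : Step (.sum I act cont hg) (act j) (cont j)
  | restrict {P a Q L} : Step P a Q → (∀ l ∈ a, l ∉ L ∧ Label.bar l ∉ L) →
      Step (.restrict P L) a (.restrict Q L)
  | rename {P a Q} {f : Renaming} : Step P a Q → (∀ l ∈ a, (f.toFun l).isSome) →
      Step (.rename P f) (f.onAction a) (.rename Q f)
  | fix {P a Q} : Step (Proc.subst (.fix P) 0 P) a Q → Step (.fix P) a Q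
  | parL {P a P' Q} : Step P a P' → Step (.par P Q) a (.par P' Q)
  | parR {P Q a Q'} : Step Q a Q' → Step (.par P Q) a (.par P Q')
  | sync {P Q P' Q' a b c} : Step P (a ∪ b) P' → Step Q (b.image Label.bar ∪ c) Q' →
      Disjoint a b → Disjoint (b.image Label.bar) c → Disjoint a c →
      Step (.par P Q) (a ∪ c) (.par P' Q')

/-- Zero or more silent (`τ`) transitions. -/
def TauStar : Proc → Proc → Prop :=
  Relation.ReflTransGen (fun P Q => Step P ∅ Q)

/-- Observable transition `P ⟹a Q`: `τ* a τ*`. -/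
def Obs (P : Proc) (a : Act) (Q : Proc) : Prop :=
  ∃ P₁ P₂, TauStar P P₁ ∧ Step P₁ a P₂ ∧ TauStar P₂ Q

/-- Observable transitions along a string of (non-`τ`) actions. -/
inductive ObsSeq : Proc → List Act → Proc → Prop where
  | nil {P Q} : TauStar P Q → ObsSeq P [] Q
  | cons {P a Q s R} : Obs P a Q → ObsSeq Q s R → ObsSeq P (a :: s) R

/-- The failures of a process: pairs `(s, X)` with `s` a string of nonempty actions and
`X` a set of nonempty actions such that `P ⟹s Q` for some `Q` refusing every action of `X`. -/
def failures (P : Proc) : Set (List Act × Set Act) :=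
  { sX | (∀ a ∈ sX.1, a.Nonempty) ∧ (∀ a ∈ sX.2, a.Nonempty) ∧
      ∃ Q, ObsSeq P sX.1 Q ∧ ∀ a ∈ sX.2, ¬∃ R, Obs Q a R }

/-- Failures equivalence. -/
def FailEq (P Q : Proc) : Prop := failures P = failures Q

/-- Weak simulations (with respect to the observable transitions). -/
def IsWeakSim (R : Proc → Proc → Prop) : Prop :=
  ∀ ⦃P Q⦄, R P Q →
    (∀ P', TauStar P P' → ∃ Q', TauStar Q Q' ∧ R P' Q') ∧
    (∀ a P', (a : Act).Nonempty → Obs P a P' → ∃ Q', Obs Q a Q' ∧ R P' Q')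

/-- Weak bisimilarity. -/
def WeakBisim (P Q : Proc) : Prop :=
  ∃ R : Proc → Proc → Prop, IsWeakSim R ∧ IsWeakSim (fun x y => R y x) ∧ R P Q
/-! ## The split name space and the basic combinators -/

/-- Build a bar-preserving partial injective renaming from a partial injective map on names. -/
def Renaming.ofNameFun (f : ℕ → Option ℕ)
    (hf : ∀ ⦃x y z : ℕ⦄, f x = some z → f y = some z → x = y) : Renaming where
  toFun := fun l =>
    match l with
    | .inl n => (f n).map .inl
    | .inr n => (f n).map .inr
  inj := by
    rintro (x | x) (y | y) (z | z) hx hy <;>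
      simp only [Option.map_eq_some_iff] at hx hy <;>
      obtain ⟨a, ha, ha'⟩ := hx <;> obtain ⟨b, hb, hb'⟩ := hy <;>
        solve
          | (cases ha'; cases hb'; exact congrArg _ (hf ha hb))
          | (cases hb')
          | (cases ha')
  bar := by
    rintro (n | n) <;> cases hf : f n <;> simp [Label.bar, hf]

/-- The underlying name of a label. -/
def Label.name : Label → ℕ := Sum.elim id id

/-- The injection `l` of the name space onto its "left" half (even names). -/
def lRen : Renaming := Renaming.ofNameFun (fun n => some (2 * n)) (by intro x y z hx hy; simp only [Option.some.injEq] at hx hy; omega)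

/-- The injection `r` of the name space onto its "right" half (odd names). -/
def rRen : Renaming := Renaming.ofNameFun (fun n => some (2 * n + 1)) (by intro x y z hx hy; simp only [Option.some.injEq] at hx hy; omega)

/-- The partial inverse `l⁻¹` of `l`. -/
def lInv : Renaming :=
  Renaming.ofNameFun (fun n => if n % 2 = 0 then some (n / 2) else none)
    (by intro x y z hx hy; try dsimp only at hx hy
        split at hx <;> split at hy <;> simp_all <;> omega)

/-- The partial inverse `r⁻¹` of `r`. -/
def rInv : Renaming :=
  Renaming.ofNameFun (fun n => if n % 2 = 1 then some (n / 2) else none)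
    (by intro x y z hx hy; try dsimp only at hx hy
        split at hx <;> split at hy <;> simp_all <;> omega)

/-- The left half `ℒ_l` of the label space. -/
def LabL : Set Label := {x | x.name % 2 = 0}

/-- The right half `ℒ_r` of the label space. -/
def LabR : Set Label := {x | x.name % 2 = 1}

/-- Tensor product: disjoint (non-communicating) parallel composition `P[l] | Q[r]`. -/
def tensor (P Q : Proc) : Proc := .par (P.rename lRen) (Q.rename rRen)

/-- Left (forwards) application `⟨Q | P⟩ = ((Q[l] | P) ∖ ℒ_l)[r⁻¹]`. -/
def lapp (Q P : Proc) : Proc := ((Proc.par (Q.rename lRen) P).restrict LabL).rename rInv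

/-- Right (reverse) application `(P | R⟩ = ((P | R[r]) ∖ ℒ_r)[l⁻¹]`. -/
def rapp (P R : Proc) : Proc := ((Proc.par P (R.rename rRen)).restrict LabR).rename lInv

/-! ### The three-fold decomposition `𝒩 = 𝒩₁ ∪̇ 𝒩₂ ∪̇ 𝒩₃` and composition -/

/-- `φ₁₂ : 𝒩 ≅ 𝒩₁ ∪̇ 𝒩₂` (`𝒩ᵢ` = names `≡ i - 1 (mod 3)`), carrying `𝒩_l` onto `𝒩₁`, `𝒩_r` onto `𝒩₂`. -/
def phi12 : Renaming :=
  Renaming.ofNameFun (fun n => some (if n % 2 = 0 then 3 * (n / 2) else 3 * (n / 2) + 1))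
    (by intro x y z hx hy; try dsimp only at hx hy
        simp only [Option.some.injEq] at hx hy
        split at hx <;> split at hy <;> omega)

/-- `φ₂₃ : 𝒩 ≅ 𝒩₂ ∪̇ 𝒩₃`, carrying `𝒩_l` onto `𝒩₂`, `𝒩_r` onto `𝒩₃`. -/
def phi23 : Renaming :=
  Renaming.ofNameFun (fun n => some (if n % 2 = 0 then 3 * (n / 2) + 1 else 3 * (n / 2) + 2))
    (by intro x y z hx hy; try dsimp only at hx hy
        simp only [Option.some.injEq] at hx hy
        split at hx <;> split at hy <;> omega)

/-- The partial inverse `φ₁₃⁻¹` of `φ₁₃ : 𝒩 ≅ 𝒩₁ ∪̇ 𝒩₃`. -/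
def phi13Inv : Renaming :=
  Renaming.ofNameFun
    (fun n => if n % 3 = 0 then some (2 * (n / 3)) else if n % 3 = 2 then some (2 * (n / 3) + 1) else none)
    (by intro x y z hx hy; try dsimp only at hx hy
        split at hx <;> split at hy <;> simp_all <;> omega)

/-- The middle part `𝒩₂` of the label space (as a set of labels). -/
def Lab2 : Set Label := {x | x.name % 3 = 1}

/-- Composition `P ; Q = ((P[φ₁₂] | Q[φ₂₃]) ∖ 𝒩₂)[φ₁₃⁻¹]`. -/
def comp (P Q : Proc) : Proc :=
  ((Proc.par (P.rename phi12) (Q.rename phi23)).restrict Lab2).rename phi13Inv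

/-! ### The identity (wire) process -/

/-- The identity process `I = rec X. Σ_{a ∈ Act₊} (l(a) ∪ r(a)‾).X`. -/
noncomputable def Iproc : Proc :=
  .fix (.sum {n | ∃ a : Act, (Encodable.decode n : Option Act) = some a ∧ a.Nonempty}
    (fun n =>
      match (Encodable.decode n : Option Act) with
      | some a => lRen.onAction a ∪ (rRen.onAction a).image Label.bar
      | none => {Sum.inl 0})
    (fun _ => .var 0)
    (by rintro n ⟨a, ha, hne⟩
        simp only [ha]
        obtain ⟨x, hx⟩ := hne
        refine Finset.Nonempty.mono Finset.subset_union_left ⟨(Sum.map (2 * ·) (2 * ·)) x, ?_⟩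
        simp only [Renaming.onAction, Finset.mem_filterMap]
        exact ⟨x, hx, by cases x <;> rfl⟩))

/-! ## Guarded choice combinators, the additive pairing and injections, `!P`, divergence -/

/-- Binary guarded sum `a.P + b.Q` (guards must be non-`τ`). -/
def gsum2 (a : Act) (P : Proc) (b : Act) (Q : Proc) (ha : a.Nonempty) (hb : b.Nonempty) : Proc :=
  .sum {0, 1} (fun n => if n = 0 then a else b) (fun n => if n = 0 then P else Q)
    (by intro n _; (try dsimp only); split <;> assumption)

/-- Ternary guarded sum `a.P + b.Q + c.R`. -/
def gsum3 (a : Act) (P : Proc) (b : Act) (Q : Proc) (c : Act) (R : Proc)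
    (ha : a.Nonempty) (hb : b.Nonempty) (hc : c.Nonempty) : Proc :=
  .sum {0, 1, 2} (fun n => if n = 0 then a else if n = 1 then b else c)
    (fun n => if n = 0 then P else if n = 1 then Q else R)
    (by intro n _; (try dsimp only); split <;> [skip; split] <;> assumption)

/-- The distinguished names: `α = 0`, `β = 1`, `ω = 2`, `δ = 3`, `γ = 4`, `σ = 5`. -/
def αAct : Act := {Sum.inl 0}
def βAct : Act := {Sum.inl 1}
def αBar : Act := {Sum.inr 0}
def βBar : Act := {Sum.inr 1}
def ωAct : Act := {Sum.inl 2}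
def δBar : Act := {Sum.inr 3}
def γBar : Act := {Sum.inr 4}

/-- The additive pairing `⟨P, Q⟩ = r(α).P + r(β).Q`  (`r(α) = 1`, `r(β) = 3`). -/
def pairR (P Q : Proc) : Proc :=
  gsum2 {Sum.inl 1} P {Sum.inl 3} Q (Finset.singleton_nonempty _) (Finset.singleton_nonempty _)

/-- The plain additive pairing `α.P + β.Q` used in the realizability clauses for `&`. -/
def pairProc (P Q : Proc) : Proc :=
  gsum2 αAct P βAct Q (Finset.singleton_nonempty _) (Finset.singleton_nonempty _)

/-- The left injection `l(P) = l(α)‾.P`  (`l(α) = 0`). -/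
def injl (P : Proc) : Proc := .pre {Sum.inr 0} P

/-- The right injection `r(Q) = r(β)‾.Q`  (`r(β) = 3`). -/
def injr (Q : Proc) : Proc := .pre {Sum.inr 3} Q

/-- The exponential combinator `!P = rec X.(ω.0 + δ.P + γ.(X[l] | X[r]))`. -/
def bangProc (P : Proc) : Proc :=
  .fix (gsum3 ωAct Proc.nil ({Sum.inl 3} : Act) P ({Sum.inl 4} : Act)
    (.par (Proc.rename (.var 0) lRen) (Proc.rename (.var 0) rRen))
    (Finset.singleton_nonempty _) (Finset.singleton_nonempty _) (Finset.singleton_nonempty _))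

/-- `P` diverges if there is an infinite sequence of `τ`-transitions from `P`. -/
def Diverges (P : Proc) : Prop :=
  ∃ f : ℕ → Proc, f 0 = P ∧ ∀ n, Step (f n) ∅ (f (n + 1))

/-- `P ⊥ Q`: closing the system, `P` and `Q` interacting with each other yield no divergence. -/
def Orth (P Q : Proc) : Prop := ¬ Diverges ((Proc.par P Q).restrict Set.univ)

/-! ## Auxiliary lemmas for the injectivity of the tensor product -/

/-- The total function underlying `lRen`. -/
def lFun : Label → Label := Sum.map (2 * ·) (2 * ·)

/-- The total function underlying `rRen`. -/
def rFun : Label → Label := Sum.map (2 * · + 1) (2 * · + 1)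

lemma lRen_toFun (x : Label) : lRen.toFun x = some (lFun x) := by cases x <;> rfl
lemma rRen_toFun (x : Label) : rRen.toFun x = some (rFun x) := by cases x <;> rfl

lemma lFun_inj : Function.Injective lFun := by
  rintro (a | a) (b | b) h <;> simp [lFun] at h ⊢ <;> omega

lemma rFun_inj : Function.Injective rFun := by
  rintro (a | a) (b | b) h <;> simp [rFun] at h ⊢ <;> omega

lemma onAction_l (a : Act) : lRen.onAction a = a.image lFun := by
  ext x
  simp only [Renaming.onAction, Finset.mem_filterMap, lRen_toFun, Option.some.injEq,
    Finset.mem_image]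

lemma onAction_r (a : Act) : rRen.onAction a = a.image rFun := by
  ext x
  simp only [Renaming.onAction, Finset.mem_filterMap, rRen_toFun, Option.some.injEq,
    Finset.mem_image]

lemma onAction_l_inj : Function.Injective lRen.onAction := by
  intro a b h
  rw [onAction_l, onAction_l] at h
  exact Finset.image_injective lFun_inj h

lemma onAction_r_inj : Function.Injective rRen.onAction := by
  intro a b h
  rw [onAction_r, onAction_r] at h
  exact Finset.image_injective rFun_inj h

lemma onAction_l_empty : lRen.onAction ∅ = ∅ := by simp [onAction_l]
lemma onAction_r_empty : rRen.onAction ∅ = ∅ := by simp [onAction_r]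

lemma onAction_l_nonempty {a : Act} (h : a.Nonempty) : (lRen.onAction a).Nonempty := by
  rw [onAction_l]; exact h.image _

lemma onAction_r_nonempty {a : Act} (h : a.Nonempty) : (rRen.onAction a).Nonempty := by
  rw [onAction_r]; exact h.image _

lemma name_lFun (x : Label) : (lFun x).name % 2 = 0 := by
  cases x <;> simp [lFun, Label.name]

lemma name_rFun (x : Label) : (rFun x).name % 2 = 1 := by
  cases x <;> simp [rFun, Label.name] <;> omega

lemma mem_onAction_l {x : Label} {a : Act} (h : x ∈ lRen.onAction a) : x.name % 2 = 0 := by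
  rw [onAction_l] at h
  obtain ⟨y, _, rfl⟩ := Finset.mem_image.mp h
  exact name_lFun y

lemma mem_onAction_r {x : Label} {a : Act} (h : x ∈ rRen.onAction a) : x.name % 2 = 1 := by
  rw [onAction_r] at h
  obtain ⟨y, _, rfl⟩ := Finset.mem_image.mp h
  exact name_rFun y

lemma name_bar (x : Label) : (Label.bar x).name = x.name := by
  cases x <;> rfl

/-- Inversion for steps of a renamed process. -/
lemma rename_step_inv {P : Proc} {f : Renaming} {A : Act} {R : Proc}
    (h : Step (Proc.rename P f) A R) :
    ∃ a Q, Step P a Q ∧ A = f.onAction a ∧ R = Proc.rename Q f := by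
  cases h with
  | rename hs _ => exact ⟨_, _, hs, rfl, rfl⟩

/-- One-step inversion for the tensor product. -/
lemma tensor_step_inv {P Q : Proc} {A : Act} {R : Proc}
    (h : Step (tensor P Q) A R) :
    ∃ a c P' Q', A = lRen.onAction a ∪ rRen.onAction c ∧ R = tensor P' Q' ∧
      (Step P a P' ∨ (a = ∅ ∧ P' = P)) ∧ (Step Q c Q' ∨ (c = ∅ ∧ Q' = Q)) := by
  rw [tensor] at h
  cases h with
  | parL hs =>
    obtain ⟨a, P', hP, rfl, rfl⟩ := rename_step_inv hs
    exact ⟨a, ∅, P', Q, by rw [onAction_r_empty, Finset.union_empty],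
      rfl, Or.inl hP, Or.inr ⟨rfl, rfl⟩⟩
  | parR hs =>
    obtain ⟨c, Q', hQ, rfl, rfl⟩ := rename_step_inv hs
    exact ⟨∅, c, P, Q', by rw [onAction_l_empty, Finset.empty_union],
      rfl, Or.inr ⟨rfl, rfl⟩, Or.inl hQ⟩
  | @sync _ _ _ _ a b c hPs hQs hab hbc hac =>
    obtain ⟨a₁, P', hP, hA1, rfl⟩ := rename_step_inv hPs
    obtain ⟨c₁, Q', hQ, hA2, rfl⟩ := rename_step_inv hQs
    have hb : b = ∅ := by
      by_contra hne
      obtain ⟨x, hx⟩ := Finset.nonempty_iff_ne_empty.mpr hne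
      have h1 : x.name % 2 = 0 := mem_onAction_l (by rw [← hA1]; exact Finset.mem_union_right _ hx)
      have h2 : (Label.bar x).name % 2 = 1 := mem_onAction_r
        (by rw [← hA2]; exact Finset.mem_union_left _ (Finset.mem_image_of_mem _ hx))
      rw [name_bar] at h2; omega
    subst hb
    rw [Finset.union_empty] at hA1
    rw [Finset.image_empty, Finset.empty_union] at hA2
    exact ⟨a₁, c₁, P', Q', by rw [← hA1, ← hA2], rfl, Or.inl hP, Or.inl hQ⟩

/-- Inversion of `τ*` for the tensor product. -/
lemma tensor_tau_inv {P Q R : Proc} (h : TauStar (tensor P Q) R) :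
    ∃ P' Q', TauStar P P' ∧ TauStar Q Q' ∧ R = tensor P' Q' := by
  induction h with
  | refl => exact ⟨P, Q, .refl, .refl, rfl⟩
  | tail _ hstep ih =>
    obtain ⟨P', Q', hP, hQ, rfl⟩ := ih
    obtain ⟨a, c, P'', Q'', hA, rfl, hsP, hsQ⟩ := tensor_step_inv hstep
    have ha : a = ∅ := by
      have := Finset.union_eq_empty.mp hA.symm
      have h1 := this.1; rw [onAction_l] at h1
      exact Finset.image_eq_empty.mp h1
    have hc : c = ∅ := by
      have := Finset.union_eq_empty.mp hA.symm
      have h2 := this.2; rw [onAction_r] at h2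
      exact Finset.image_eq_empty.mp h2
    subst ha; subst hc
    refine ⟨P'', Q'', ?_, ?_, rfl⟩
    · rcases hsP with hs | ⟨_, rfl⟩
      · exact hP.tail hs
      · exact hP
    · rcases hsQ with hs | ⟨_, rfl⟩
      · exact hQ.tail hs
      · exact hQ

/-- Forward step of the left component in a tensor. -/
lemma tensor_stepL {P P' : Proc} {a : Act} (h : Step P a P') (Q : Proc) :
    Step (tensor P Q) (lRen.onAction a) (tensor P' Q) :=
  Step.parL (Step.rename h (fun l _ => by rw [lRen_toFun]; rfl))

lemma tensor_stepR {Q Q' : Proc} {a : Act} (h : Step Q a Q') (P : Proc) :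
    Step (tensor P Q) (rRen.onAction a) (tensor P Q') :=
  Step.parR (Step.rename h (fun l _ => by rw [rRen_toFun]; rfl))

lemma tensor_tauL {P P' : Proc} (h : TauStar P P') (Q : Proc) :
    TauStar (tensor P Q) (tensor P' Q) :=
  Relation.ReflTransGen.lift (fun X => tensor X Q)
    (fun _ _ hab => by have := tensor_stepL hab Q; rwa [onAction_l_empty] at this) _ _ h

lemma tensor_tauR {Q Q' : Proc} (h : TauStar Q Q') (P : Proc) :
    TauStar (tensor P Q) (tensor P Q') :=
  Relation.ReflTransGen.lift (fun X => tensor P X)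
    (fun _ _ hab => by have := tensor_stepR hab P; rwa [onAction_r_empty] at this) _ _ h

lemma tensor_obsL {P P' : Proc} {a : Act} (h : Obs P a P') (Q : Proc) :
    Obs (tensor P Q) (lRen.onAction a) (tensor P' Q) := by
  obtain ⟨P₁, P₂, h1, h2, h3⟩ := h
  exact ⟨tensor P₁ Q, tensor P₂ Q, tensor_tauL h1 Q, tensor_stepL h2 Q, tensor_tauL h3 Q⟩

lemma tensor_obsR {Q Q' : Proc} {a : Act} (h : Obs Q a Q') (P : Proc) :
    Obs (tensor P Q) (rRen.onAction a) (tensor P Q') := by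
  obtain ⟨Q₁, Q₂, h1, h2, h3⟩ := h
  exact ⟨tensor P Q₁, tensor P Q₂, tensor_tauR h1 P, tensor_stepR h2 P, tensor_tauR h3 P⟩

lemma tensor_obsSeqL {P P' : Proc} {s : List Act} (h : ObsSeq P s P') (Q : Proc) :
    ObsSeq (tensor P Q) (s.map lRen.onAction) (tensor P' Q) := by
  induction h with
  | nil ht => exact .nil (tensor_tauL ht Q)
  | cons hobs _ ih => exact .cons (tensor_obsL hobs Q) ih

lemma tensor_obsSeqR {Q Q' : Proc} {s : List Act} (h : ObsSeq Q s Q') (P : Proc) :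
    ObsSeq (tensor P Q) (s.map rRen.onAction) (tensor P Q') := by
  induction h with
  | nil ht => exact .nil (tensor_tauR ht P)
  | cons hobs _ ih => exact .cons (tensor_obsR hobs P) ih

/-- Inversion of a left-labelled step of a tensor. -/
lemma tensor_stepL_inv {P Q : Proc} {a₀ : Act} {R : Proc} (hne : a₀.Nonempty)
    (h : Step (tensor P Q) (lRen.onAction a₀) R) :
    ∃ P' Q', Step P a₀ P' ∧ TauStar Q Q' ∧ R = tensor P' Q' := by
  obtain ⟨a, c, P', Q', hA, rfl, hsP, hsQ⟩ := tensor_step_inv h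
  have hc : c = ∅ := by
    by_contra hcne
    obtain ⟨x, hx⟩ := Finset.nonempty_iff_ne_empty.mpr hcne
    have h2 : (rFun x).name % 2 = 0 := mem_onAction_l (by
      rw [hA]
      exact Finset.mem_union_right _ (by rw [onAction_r]; exact Finset.mem_image_of_mem rFun hx))
    have h1 := name_rFun x
    omega
  subst hc
  rw [onAction_r_empty, Finset.union_empty] at hA
  have ha : a = a₀ := onAction_l_inj hA.symm
  subst ha
  rcases hsP with hs | ⟨rfl, _⟩
  · refine ⟨P', Q', hs, ?_, rfl⟩
    rcases hsQ with hq | ⟨_, rfl⟩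
    · exact Relation.ReflTransGen.single hq
    · exact .refl
  · exact absurd rfl (Finset.nonempty_iff_ne_empty.mp hne)

lemma tensor_stepR_inv {P Q : Proc} {a₀ : Act} {R : Proc} (hne : a₀.Nonempty)
    (h : Step (tensor P Q) (rRen.onAction a₀) R) :
    ∃ P' Q', TauStar P P' ∧ Step Q a₀ Q' ∧ R = tensor P' Q' := by
  obtain ⟨a, c, P', Q', hA, rfl, hsP, hsQ⟩ := tensor_step_inv h
  have ha : a = ∅ := by
    by_contra hane
    obtain ⟨x, hx⟩ := Finset.nonempty_iff_ne_empty.mpr hane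
    have h2 : (lFun x).name % 2 = 1 := mem_onAction_r (by
      rw [hA]
      exact Finset.mem_union_left _ (by rw [onAction_l]; exact Finset.mem_image_of_mem lFun hx))
    have h1 := name_lFun x
    omega
  subst ha
  rw [onAction_l_empty, Finset.empty_union] at hA
  have hc : c = a₀ := onAction_r_inj hA.symm
  subst hc
  rcases hsQ with hs | ⟨rfl, _⟩
  · refine ⟨P', Q', ?_, hs, rfl⟩
    rcases hsP with hp | ⟨_, rfl⟩
    · exact Relation.ReflTransGen.single hp
    · exact .refl
  · exact absurd rfl (Finset.nonempty_iff_ne_empty.mp hne)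

lemma tensor_obsL_inv {P Q : Proc} {a₀ : Act} {R : Proc} (hne : a₀.Nonempty)
    (h : Obs (tensor P Q) (lRen.onAction a₀) R) :
    ∃ P' Q', Obs P a₀ P' ∧ R = tensor P' Q' := by
  obtain ⟨M₁, M₂, h1, h2, h3⟩ := h
  obtain ⟨Pa, Qa, hPa, _, rfl⟩ := tensor_tau_inv h1
  obtain ⟨Pb, Qb, hstep, _, rfl⟩ := tensor_stepL_inv hne h2
  obtain ⟨Pc, Qc, hPc, _, rfl⟩ := tensor_tau_inv h3
  exact ⟨Pc, Qc, ⟨Pa, Pb, hPa, hstep, hPc⟩, rfl⟩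

lemma tensor_obsR_inv {P Q : Proc} {a₀ : Act} {R : Proc} (hne : a₀.Nonempty)
    (h : Obs (tensor P Q) (rRen.onAction a₀) R) :
    ∃ P' Q', Obs Q a₀ Q' ∧ R = tensor P' Q' := by
  obtain ⟨M₁, M₂, h1, h2, h3⟩ := h
  obtain ⟨Pa, Qa, _, hQa, rfl⟩ := tensor_tau_inv h1
  obtain ⟨Pb, Qb, _, hstep, rfl⟩ := tensor_stepR_inv hne h2
  obtain ⟨Pc, Qc, _, hQc, rfl⟩ := tensor_tau_inv h3
  exact ⟨Pc, Qc, ⟨Qa, Qb, hQa, hstep, hQc⟩, rfl⟩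

lemma tensor_obsSeqL_inv {P Q : Proc} {s : List Act} {R : Proc}
    (hs : ∀ a ∈ s, a.Nonempty) (h : ObsSeq (tensor P Q) (s.map lRen.onAction) R) :
    ∃ P' Q', ObsSeq P s P' ∧ R = tensor P' Q' := by
  induction s generalizing P Q with
  | nil =>
    cases h with
    | nil ht =>
      obtain ⟨P', Q', hP, _, rfl⟩ := tensor_tau_inv ht
      exact ⟨P', Q', .nil hP, rfl⟩
  | cons a s ih =>
    cases h with
    | cons hobs hrest =>
      obtain ⟨P', Q', hP, rfl⟩ := tensor_obsL_inv (hs a (by simp)) hobs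
      obtain ⟨P'', Q'', h1, rfl⟩ := ih (fun b hb => hs b (by simp [hb])) hrest
      exact ⟨P'', Q'', .cons hP h1, rfl⟩

lemma tensor_obsSeqR_inv {P Q : Proc} {s : List Act} {R : Proc}
    (hs : ∀ a ∈ s, a.Nonempty) (h : ObsSeq (tensor P Q) (s.map rRen.onAction) R) :
    ∃ P' Q', ObsSeq Q s Q' ∧ R = tensor P' Q' := by
  induction s generalizing P Q with
  | nil =>
    cases h with
    | nil ht =>
      obtain ⟨P', Q', _, hQ, rfl⟩ := tensor_tau_inv ht
      exact ⟨P', Q', .nil hQ, rfl⟩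
  | cons a s ih =>
    cases h with
    | cons hobs hrest =>
      obtain ⟨P', Q', hQ, rfl⟩ := tensor_obsR_inv (hs a (by simp)) hobs
      obtain ⟨P'', Q'', h1, rfl⟩ := ih (fun b hb => hs b (by simp [hb])) hrest
      exact ⟨P'', Q'', .cons hQ h1, rfl⟩

/-- The failures of the left component are determined by the failures of the tensor. -/
lemma failures_tensor_left (P Q : Proc) (s : List Act) (X : Set Act) :
    (s, X) ∈ failures P ↔
      (s.map lRen.onAction, lRen.onAction '' X) ∈ failures (tensor P Q) := by
  constructor
  · rintro ⟨hs, hX, P', hseq, href⟩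
    refine ⟨?_, ?_, tensor P' Q, tensor_obsSeqL hseq Q, ?_⟩
    · intro a ha
      obtain ⟨b, hb, rfl⟩ := List.mem_map.mp ha
      exact onAction_l_nonempty (hs b hb)
    · rintro a ⟨b, hb, rfl⟩
      exact onAction_l_nonempty (hX b hb)
    · rintro a ⟨b, hb, rfl⟩ ⟨R, hR⟩
      obtain ⟨P'', Q'', hobs, _⟩ := tensor_obsL_inv (hX b hb) hR
      exact href b hb ⟨P'', hobs⟩
  · rintro ⟨hs, hX, R, hseq, href⟩
    have hs' : ∀ a ∈ s, a.Nonempty := by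
      intro a ha
      have := hs (lRen.onAction a) (List.mem_map.mpr ⟨a, ha, rfl⟩)
      rw [onAction_l] at this
      exact Finset.Nonempty.of_image this
    obtain ⟨P', Q', hP, rfl⟩ := tensor_obsSeqL_inv hs' hseq
    refine ⟨hs', ?_, P', hP, ?_⟩
    · intro a ha
      have := hX (lRen.onAction a) ⟨a, ha, rfl⟩
      rw [onAction_l] at this
      exact Finset.Nonempty.of_image this
    · rintro a ha ⟨S, hS⟩
      exact href (lRen.onAction a) ⟨a, ha, rfl⟩ ⟨tensor S Q', tensor_obsL hS Q'⟩

/-- The failures of the right component are determined by the failures of the tensor. -/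
lemma failures_tensor_right (P Q : Proc) (s : List Act) (X : Set Act) :
    (s, X) ∈ failures Q ↔
      (s.map rRen.onAction, rRen.onAction '' X) ∈ failures (tensor P Q) := by
  constructor
  · rintro ⟨hs, hX, Q', hseq, href⟩
    refine ⟨?_, ?_, tensor P Q', tensor_obsSeqR hseq P, ?_⟩
    · intro a ha
      obtain ⟨b, hb, rfl⟩ := List.mem_map.mp ha
      exact onAction_r_nonempty (hs b hb)
    · rintro a ⟨b, hb, rfl⟩
      exact onAction_r_nonempty (hX b hb)
    · rintro a ⟨b, hb, rfl⟩ ⟨R, hR⟩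
      obtain ⟨P'', Q'', hobs, _⟩ := tensor_obsR_inv (hX b hb) hR
      exact href b hb ⟨Q'', hobs⟩
  · rintro ⟨hs, hX, R, hseq, href⟩
    have hs' : ∀ a ∈ s, a.Nonempty := by
      intro a ha
      have := hs (rRen.onAction a) (List.mem_map.mpr ⟨a, ha, rfl⟩)
      rw [onAction_r] at this
      exact Finset.Nonempty.of_image this
    obtain ⟨P', Q', hQ, rfl⟩ := tensor_obsSeqR_inv hs' hseq
    refine ⟨hs', ?_, Q', hQ, ?_⟩
    · intro a ha
      have := hX (rRen.onAction a) ⟨a, ha, rfl⟩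
      rw [onAction_r] at this
      exact Finset.Nonempty.of_image this
    · rintro a ha ⟨S, hS⟩
      exact href (rRen.onAction a) ⟨a, ha, rfl⟩ ⟨tensor P' S, tensor_obsR hS P'⟩

/-- **The tensor product of processes is injective up to failures equivalence.** -/
theorem tensor_injective_failures (P₁ P₂ Q₁ Q₂ : Proc)
    (h : FailEq (tensor P₁ P₂) (tensor Q₁ Q₂)) :
    FailEq P₁ Q₁ ∧ FailEq P₂ Q₂ := by
  constructor
  · ext ⟨s, X⟩
    rw [failures_tensor_left P₁ P₂ s X, failures_tensor_left Q₁ Q₂ s X, h]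
  · ext ⟨s, X⟩
    rw [failures_tensor_right P₁ P₂ s X, failures_tensor_right Q₁ Q₂ s X, h]
end

section
/- Composition of processes is associative up to failures equivalence: (P ; Q) ; R ≈_f P ; (Q ; R) for all processes P, Q, R. -/
set_option linter.unnecessarySeqFocus false

/-! ## Auxiliary development for associativity -/

namespace CompAssoc

/-- Name maps underlying `phi12`, `phi23`. -/
def g12 (n : ℕ) : ℕ := if n % 2 = 0 then 3 * (n / 2) else 3 * (n / 2) + 1
def g23 (n : ℕ) : ℕ := if n % 2 = 0 then 3 * (n / 2) + 1 else 3 * (n / 2) + 2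
def g13inv (n : ℕ) : ℕ := if n % 3 = 0 then 2 * (n / 3) else 2 * (n / 3) + 1

/-- Lift a name map to labels. -/
def lmap (g : ℕ → ℕ) : Label → Label := Sum.map g g

/-- The sync correspondence: a label with odd name `2k+1` on one side corresponds to
the bar of the label with name `2k` on the other side. -/
def sm : Label → Label
  | .inl n => .inr (n - 1)
  | .inr n => .inl (n - 1)

lemma name_lmap (g : ℕ → ℕ) (l : Label) : (lmap g l).name = g l.name := by
  cases l <;> rfl

lemma name_bar (l : Label) : (Label.bar l).name = l.name := by cases l <;> rfl

lemma name_sm (l : Label) : (sm l).name = l.name - 1 := by cases l <;> rfl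

lemma lmap_inj {g : ℕ → ℕ} (hg : Function.Injective g) : Function.Injective (lmap g) := by
  rintro (x | x) (y | y) h <;> simp [lmap] at h <;> simp [hg h]

lemma g12_inj : Function.Injective g12 := by
  intro x y h; unfold g12 at h; split at h <;> split at h <;> omega

lemma g23_inj : Function.Injective g23 := by
  intro x y h; unfold g23 at h; split at h <;> split at h <;> omega

lemma phi12_toFun (l : Label) : phi12.toFun l = some (lmap g12 l) := by
  cases l <;> rfl

lemma phi23_toFun (l : Label) : phi23.toFun l = some (lmap g23 l) := by
  cases l <;> rfl

lemma mem_Lab2 (l : Label) : l ∈ Lab2 ↔ l.name % 3 = 1 := Iff.rfl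

lemma phi13Inv_toFun_aux {n : ℕ} (hn : n % 3 ≠ 1) :
    (if n % 3 = 0 then some (2 * (n / 3)) else if n % 3 = 2 then some (2 * (n / 3) + 1) else none)
      = some (g13inv n) := by
  have : n % 3 = 0 ∨ n % 3 = 2 := by omega
  unfold g13inv
  rcases this with h3 | h3
  · rw [if_pos h3, if_pos h3]
  · rw [if_neg (by omega), if_pos h3, if_neg (by omega)]

lemma phi13Inv_toFun (l : Label) (h : l.name % 3 ≠ 1) :
    phi13Inv.toFun l = some (lmap g13inv l) := by
  cases l with
  | inl n =>
      have hn : n % 3 ≠ 1 := h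
      show ((if n % 3 = 0 then some (2 * (n / 3)) else if n % 3 = 2 then some (2 * (n / 3) + 1) else none).map Sum.inl) = _
      rw [phi13Inv_toFun_aux hn]; rfl
  | inr n =>
      have hn : n % 3 ≠ 1 := h
      show ((if n % 3 = 0 then some (2 * (n / 3)) else if n % 3 = 2 then some (2 * (n / 3) + 1) else none).map Sum.inr) = _
      rw [phi13Inv_toFun_aux hn]; rfl

/-- `onAction` of a renaming that is total (with value `h`) on the given set is the image. -/
lemma onAction_eq_image {f : Renaming} {h : Label → Label} {s : Act}
    (hf : ∀ l ∈ s, f.toFun l = some (h l)) : f.onAction s = s.image h := by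
  ext y
  simp only [Renaming.onAction, Finset.mem_filterMap, Finset.mem_image]
  constructor
  · rintro ⟨x, hx, hxy⟩
    refine ⟨x, hx, ?_⟩
    rw [hf x hx] at hxy; exact Option.some_injective _ hxy
  · rintro ⟨x, hx, hxy⟩
    exact ⟨x, hx, by rw [hf x hx, hxy]⟩

lemma phi12_onAction (s : Act) : phi12.onAction s = s.image (lmap g12) :=
  onAction_eq_image (fun l _ => phi12_toFun l)

lemma phi23_onAction (s : Act) : phi23.onAction s = s.image (lmap g23) :=
  onAction_eq_image (fun l _ => phi23_toFun l)

lemma phi13Inv_onAction {s : Act} (hs : ∀ l ∈ s, l.name % 3 ≠ 1) :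
    phi13Inv.onAction s = s.image (lmap g13inv) :=
  onAction_eq_image (fun l hl => phi13Inv_toFun l (hs l hl))

/-- Evenness/oddness of all names in an action. -/
def Ev (s : Act) : Prop := ∀ l ∈ s, l.name % 2 = 0
def Od (s : Act) : Prop := ∀ l ∈ s, l.name % 2 = 1

lemma Ev.union {s t : Act} (hs : Ev s) (ht : Ev t) : Ev (s ∪ t) := by
  intro l hl; rcases Finset.mem_union.mp hl with h | h; exacts [hs l h, ht l h]

lemma Od.union {s t : Act} (hs : Od s) (ht : Od t) : Od (s ∪ t) := by
  intro l hl; rcases Finset.mem_union.mp hl with h | h; exacts [hs l h, ht l h]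

lemma Ev.empty : Ev (∅ : Act) := by intro l hl; simp at hl
lemma Od.empty : Od (∅ : Act) := by intro l hl; simp at hl

lemma Od.sm_image {s : Act} (hs : Od s) : Ev (s.image sm) := by
  intro l hl
  obtain ⟨x, hx, rfl⟩ := Finset.mem_image.mp hl
  have := hs x hx
  rw [name_sm]; omega

/-- An odd action included in an even one is empty. -/
lemma od_subset_ev {s t : Act} (hs : Od s) (ht : Ev t) (hsub : s ⊆ t) : s = ∅ := by
  rw [Finset.eq_empty_iff_forall_notMem]
  intro l hl
  have := hs l hl; have := ht l (hsub hl); omega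

/-- Parity splitting of equal unions. -/
lemma parity_split {u b u' v' : Act} (hu : Ev u) (hb : Od b) (hu' : Ev u') (hv' : Od v')
    (h : u ∪ b = u' ∪ v') : u = u' ∧ b = v' := by
  constructor <;> ext l <;> constructor <;> intro hl
  · have : l ∈ u' ∪ v' := h ▸ Finset.mem_union_left _ hl
    rcases Finset.mem_union.mp this with h' | h'
    · exact h'
    · have := hu l hl; have := hv' l h'; omega
  · have : l ∈ u ∪ b := h ▸ Finset.mem_union_left _ hl
    rcases Finset.mem_union.mp this with h' | h'
    · exact h'
    · have := hu' l hl; have := hb l h'; omega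
  · have : l ∈ u' ∪ v' := h ▸ Finset.mem_union_right _ hl
    rcases Finset.mem_union.mp this with h' | h'
    · have := hb l hl; have := hu' l h'; omega
    · exact h'
  · have : l ∈ u ∪ b := h ▸ Finset.mem_union_right _ hl
    rcases Finset.mem_union.mp this with h' | h'
    · have := hv' l hl; have := hu l h'; omega
    · exact h'

/-- Pointwise identities. -/
lemma g13inv_g12 {n : ℕ} (h : n % 2 = 0) : g13inv (g12 n) = n := by
  have h1 : g12 n = 3 * (n / 2) := if_pos h
  rw [h1]; unfold g13inv; rw [if_pos (by omega)]; omega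

lemma g13inv_g23 {n : ℕ} (h : n % 2 = 1) : g13inv (g23 n) = n := by
  have h1 : g23 n = 3 * (n / 2) + 2 := if_neg (by omega)
  rw [h1]; unfold g13inv; rw [if_neg (by omega)]; omega

lemma g13inv_g12_even {l : Label} (h : l.name % 2 = 0) : lmap g13inv (lmap g12 l) = l := by
  cases l with
  | inl n =>
      have h' : n % 2 = 0 := h
      simp only [lmap, Sum.map_inl]; rw [g13inv_g12 h']
  | inr n =>
      have h' : n % 2 = 0 := h
      simp only [lmap, Sum.map_inr]; rw [g13inv_g12 h']

lemma g13inv_g23_odd {l : Label} (h : l.name % 2 = 1) : lmap g13inv (lmap g23 l) = l := by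
  cases l with
  | inl n =>
      have h' : n % 2 = 1 := h
      simp only [lmap, Sum.map_inl]; rw [g13inv_g23 h']
  | inr n =>
      have h' : n % 2 = 1 := h
      simp only [lmap, Sum.map_inr]; rw [g13inv_g23 h']

lemma g23_sm_name {n : ℕ} (h : n % 2 = 1) : g23 (n - 1) = g12 n := by
  unfold g23 g12
  rw [if_pos (by omega : (n - 1) % 2 = 0), if_neg (by omega : ¬ n % 2 = 0)]
  omega

lemma g23_sm_eq_bar_g12 {l : Label} (h : l.name % 2 = 1) :
    lmap g23 (sm l) = Label.bar (lmap g12 l) := by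
  cases l with
  | inl n =>
      have h' : n % 2 = 1 := h
      show lmap g23 (Sum.inr (n - 1)) = Label.bar (lmap g12 (Sum.inl n))
      simp only [lmap, Sum.map_inl, Sum.map_inr, Label.bar]
      rw [g23_sm_name h']
  | inr n =>
      have h' : n % 2 = 1 := h
      show lmap g23 (Sum.inl (n - 1)) = Label.bar (lmap g12 (Sum.inr n))
      simp only [lmap, Sum.map_inl, Sum.map_inr, Label.bar]
      rw [g23_sm_name h']

/-- Mod-3 classes of images. -/
lemma g12_class {l : Label} : (lmap g12 l).name % 3 = if l.name % 2 = 0 then 0 else 1 := by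
  rw [name_lmap]; unfold g12
  by_cases h : l.name % 2 = 0 <;> simp [h] <;> omega

lemma g23_class {l : Label} : (lmap g23 l).name % 3 = if l.name % 2 = 0 then 1 else 2 := by
  rw [name_lmap]; unfold g23
  by_cases h : l.name % 2 = 0 <;> simp [h] <;> omega

/-! ### Finset helpers -/

lemma image_eq_self {g : Label → Label} {s : Act} (h : ∀ l ∈ s, g l = l) : s.image g = s := by
  rw [Finset.image_congr (g := id) (fun x hx => h x hx), Finset.image_id]

lemma disj_classes {s t : Act} {p : Label → Prop} (hs : ∀ l ∈ s, p l) (ht : ∀ l ∈ t, ¬ p l) :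
    Disjoint s t :=
  Finset.disjoint_left.mpr (fun {x} hx hy => absurd (hs x hx) (ht x hy))

lemma image_filter_class {g : Label → Label} {u : Act} {p q : Label → Prop}
    [DecidablePred p] [DecidablePred q] (h : ∀ l, q (g l) ↔ p l) :
    (u.image g).filter q = (u.filter p).image g := by
  ext y; simp only [Finset.mem_filter, Finset.mem_image]
  constructor
  · rintro ⟨⟨x, hx, rfl⟩, hq⟩; exact ⟨x, ⟨hx, (h x).mp hq⟩, rfl⟩
  · rintro ⟨x, ⟨hx, hp⟩, rfl⟩; exact ⟨⟨x, hx, rfl⟩, (h x).mpr hp⟩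

lemma filter_union_left {s t : Act} {q : Label → Prop} [DecidablePred q]
    (hs : ∀ l ∈ s, q l) (ht : ∀ l ∈ t, ¬ q l) : (s ∪ t).filter q = s := by
  ext y; simp only [Finset.mem_filter, Finset.mem_union]
  constructor
  · rintro ⟨hy | hy, hq⟩
    · exact hy
    · exact absurd hq (ht y hy)
  · intro hy; exact ⟨Or.inl hy, hs y hy⟩

lemma filter_union_right {s t : Act} {q : Label → Prop} [DecidablePred q]
    (hs : ∀ l ∈ s, ¬ q l) (ht : ∀ l ∈ t, q l) : (s ∪ t).filter q = t := by
  rw [Finset.union_comm]; exact filter_union_left ht hs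

/-! ### Mod-3 classes of renamed actions -/

lemma class_ev_g12 {u : Act} (h : Ev u) : ∀ l ∈ u.image (lmap g12), l.name % 3 = 0 := by
  intro l hl; obtain ⟨x, hx, rfl⟩ := Finset.mem_image.mp hl
  rw [g12_class, if_pos (h x hx)]

lemma class_od_g12 {u : Act} (h : Od u) : ∀ l ∈ u.image (lmap g12), l.name % 3 = 1 := by
  intro l hl; obtain ⟨x, hx, rfl⟩ := Finset.mem_image.mp hl
  rw [g12_class, if_neg (by have := h x hx; omega)]

lemma class_ev_g23 {u : Act} (h : Ev u) : ∀ l ∈ u.image (lmap g23), l.name % 3 = 1 := by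
  intro l hl; obtain ⟨x, hx, rfl⟩ := Finset.mem_image.mp hl
  rw [g23_class, if_pos (h x hx)]

lemma class_od_g23 {u : Act} (h : Od u) : ∀ l ∈ u.image (lmap g23), l.name % 3 = 2 := by
  intro l hl; obtain ⟨x, hx, rfl⟩ := Finset.mem_image.mp hl
  rw [g23_class, if_neg (by have := h x hx; omega)]

lemma class_bar {s : Act} {k : ℕ} (h : ∀ l ∈ s, l.name % 3 = k) :
    ∀ l ∈ s.image Label.bar, l.name % 3 = k := by
  intro l hl; obtain ⟨x, hx, rfl⟩ := Finset.mem_image.mp hl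
  rw [name_bar]; exact h x hx

/-! ### onAction computations -/

lemma onAction_union_ev_od {u v : Act} (hu : Ev u) (hv : Od v) :
    phi13Inv.onAction (u.image (lmap g12) ∪ v.image (lmap g23)) = u ∪ v := by
  have hc : ∀ l ∈ u.image (lmap g12) ∪ v.image (lmap g23), l.name % 3 ≠ 1 := by
    intro l hl; rcases Finset.mem_union.mp hl with h | h
    · rw [class_ev_g12 hu l h]; omega
    · rw [class_od_g23 hv l h]; omega
  rw [phi13Inv_onAction hc, Finset.image_union, Finset.image_image, Finset.image_image,
    image_eq_self (g := lmap g13inv ∘ lmap g12) (fun l hl => g13inv_g12_even (hu l hl)),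
    image_eq_self (g := lmap g13inv ∘ lmap g23) (fun l hl => g13inv_g23_odd (hv l hl))]

lemma onAction_g12_ev {u : Act} (h : Ev u) : phi13Inv.onAction (u.image (lmap g12)) = u := by
  have := onAction_union_ev_od h Od.empty
  simpa using this

lemma onAction_g23_od {v : Act} (h : Od v) : phi13Inv.onAction (v.image (lmap g23)) = v := by
  have := onAction_union_ev_od Ev.empty h
  simpa using this

/-! ### Inversion lemmas for `Step` -/

lemma step_rename_inv {P : Proc} {f : Renaming} {A : Act} {X : Proc}
    (h : Step (.rename P f) A X) :
    ∃ a Q, Step P a Q ∧ (∀ l ∈ a, (f.toFun l).isSome) ∧ A = f.onAction a ∧ X = .rename Q f := by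
  cases h with
  | rename h hs => exact ⟨_, _, h, hs, rfl, rfl⟩

lemma step_restrict_inv {P : Proc} {L : Set Label} {A : Act} {X : Proc}
    (h : Step (.restrict P L) A X) :
    ∃ Q, Step P A Q ∧ (∀ l ∈ A, l ∉ L ∧ Label.bar l ∉ L) ∧ X = .restrict Q L := by
  cases h with
  | restrict h hL => exact ⟨_, h, hL, rfl⟩

/-! ### The joint-step characterization of `comp` -/

/-- The joint transition relation underlying `comp`. -/
def CStep (P Q : Proc) (a : Act) (P' Q' : Proc) : Prop :=
  (∃ u, Step P u P' ∧ Q' = Q ∧ Ev u ∧ a = u) ∨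
  (∃ v, Step Q v Q' ∧ P' = P ∧ Od v ∧ a = v) ∨
  (∃ u b v, Step P (u ∪ b) P' ∧ Step Q (b.image sm ∪ v) Q' ∧ Ev u ∧ Od b ∧ Od v ∧ a = u ∪ v)

lemma step_comp_mk {P Q P1 Q1 : Proc} {c : Act}
    (h : Step (.par (P.rename phi12) (Q.rename phi23)) c
      (.par (P1.rename phi12) (Q1.rename phi23)))
    (hc : ∀ l ∈ c, l.name % 3 ≠ 1) :
    Step (comp P Q) (phi13Inv.onAction c) (comp P1 Q1) := by
  unfold comp
  refine Step.rename (Step.restrict h ?_) ?_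
  · intro l hl
    refine ⟨fun hm => hc l hl ((mem_Lab2 l).mp hm), fun hm => ?_⟩
    rw [mem_Lab2, name_bar] at hm
    exact hc l hl hm
  · intro l hl
    rw [phi13Inv_toFun l (hc l hl)]; rfl

lemma cstep_to_step {P Q : Proc} {a : Act} {P' Q' : Proc} (h : CStep P Q a P' Q') :
    Step (comp P Q) a (comp P' Q') := by
  rcases h with ⟨u, hP, rfl, hEv, rfl⟩ | ⟨v, hQ, rfl, hOd, rfl⟩ |
    ⟨u, b, v, hP, hQ, hEv, hOdb, hOdv, rfl⟩
  · have s1 : Step (P.rename phi12) (a.image (lmap g12)) (P'.rename phi12) := by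
      have := Step.rename (f := phi12) hP (fun l _ => by rw [phi12_toFun]; rfl)
      rwa [phi12_onAction] at this
    have hc : ∀ l ∈ a.image (lmap g12), l.name % 3 ≠ 1 := by
      intro l hl; rw [class_ev_g12 hEv l hl]; omega
    have := step_comp_mk (Q := Q') (Q1 := Q') (Step.parL s1) hc
    rwa [onAction_g12_ev hEv] at this
  · have s1 : Step (Q.rename phi23) (a.image (lmap g23)) (Q'.rename phi23) := by
      have := Step.rename (f := phi23) hQ (fun l _ => by rw [phi23_toFun]; rfl)
      rwa [phi23_onAction] at this
    have hc : ∀ l ∈ a.image (lmap g23), l.name % 3 ≠ 1 := by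
      intro l hl; rw [class_od_g23 hOd l hl]; omega
    have := step_comp_mk (P := P') (P1 := P') (Step.parR s1) hc
    rwa [onAction_g23_od hOd] at this
  · have s1 : Step (P.rename phi12) (u.image (lmap g12) ∪ b.image (lmap g12))
        (P'.rename phi12) := by
      have := Step.rename (f := phi12) hP (fun l _ => by rw [phi12_toFun]; rfl)
      rwa [phi12_onAction, Finset.image_union] at this
    have himg : (b.image sm).image (lmap g23) = (b.image (lmap g12)).image Label.bar := by
      rw [Finset.image_image, Finset.image_image]
      exact Finset.image_congr (fun x hx => g23_sm_eq_bar_g12 (hOdb x hx))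
    have s2 : Step (Q.rename phi23)
        ((b.image (lmap g12)).image Label.bar ∪ v.image (lmap g23)) (Q'.rename phi23) := by
      have := Step.rename (f := phi23) hQ (fun l _ => by rw [phi23_toFun]; rfl)
      rwa [phi23_onAction, Finset.image_union, himg] at this
    have hb1 := class_od_g12 hOdb
    have hsync := Step.sync s1 s2
      (disj_classes (class_ev_g12 hEv) (fun l hl h0 => by rw [hb1 l hl] at h0; omega))
      (disj_classes (class_bar hb1) (fun l hl h1 => by rw [class_od_g23 hOdv l hl] at h1; omega))
      (disj_classes (class_ev_g12 hEv) (fun l hl h0 => by rw [class_od_g23 hOdv l hl] at h0; omega))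
    have hc : ∀ l ∈ u.image (lmap g12) ∪ v.image (lmap g23), l.name % 3 ≠ 1 := by
      intro l hl; rcases Finset.mem_union.mp hl with h | h
      · rw [class_ev_g12 hEv l h]; omega
      · rw [class_od_g23 hOdv l h]; omega
    have := step_comp_mk hsync hc
    rwa [onAction_union_ev_od hEv hOdv] at this

lemma step_comp_inv {P Q : Proc} {A : Act} {W : Proc} (h : Step (comp P Q) A W) :
    ∃ P' Q', W = comp P' Q' ∧ CStep P Q A P' Q' := by
  unfold comp at h
  obtain ⟨a₀, Y, hY, hsome, rfl, rfl⟩ := step_rename_inv h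
  obtain ⟨Z, hZ, hL, rfl⟩ := step_restrict_inv hY
  have ha₀ : ∀ l ∈ a₀, l.name % 3 ≠ 1 := fun l hl hn => (hL l hl).1 ((mem_Lab2 l).mpr hn)
  cases hZ with
  | parL h1 =>
      obtain ⟨u, P1, hP, _, rfl, rfl⟩ := step_rename_inv h1
      rw [phi12_onAction] at ha₀ ⊢
      have hEv : Ev u := by
        intro l hl
        have hm := ha₀ _ (Finset.mem_image_of_mem _ hl)
        rw [g12_class] at hm
        by_cases hp : l.name % 2 = 0
        · exact hp
        · rw [if_neg hp] at hm; exact absurd rfl hm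
      exact ⟨P1, Q, rfl, Or.inl ⟨u, hP, rfl, hEv, onAction_g12_ev hEv⟩⟩
  | parR h1 =>
      obtain ⟨v, Q1, hQ, _, rfl, rfl⟩ := step_rename_inv h1
      rw [phi23_onAction] at ha₀ ⊢
      have hOd : Od v := by
        intro l hl
        have hm := ha₀ _ (Finset.mem_image_of_mem _ hl)
        rw [g23_class] at hm
        by_cases hp : l.name % 2 = 0
        · rw [if_pos hp] at hm; exact absurd rfl hm
        · omega
      exact ⟨P, Q1, rfl, Or.inr (Or.inl ⟨v, hQ, rfl, hOd, onAction_g23_od hOd⟩)⟩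
  | @sync _ _ P1 Q1 a₁ b₁ c₁ h1 h2 d1 d2 d3 =>
      obtain ⟨u, P1', hP, _, hequ, rfl⟩ := step_rename_inv h1
      obtain ⟨v, Q1', hQ, _, heqv, rfl⟩ := step_rename_inv h2
      rw [phi12_onAction] at hequ
      rw [phi23_onAction] at heqv
      -- mod-3 classes
      have hmemu : ∀ l ∈ a₁ ∪ b₁, l.name % 3 = 0 ∨ l.name % 3 = 1 := by
        intro l hl
        rw [hequ] at hl
        obtain ⟨x, _, rfl⟩ := Finset.mem_image.mp hl
        rw [g12_class]; split <;> simp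
      have hmemv : ∀ l ∈ (b₁.image Label.bar) ∪ c₁, l.name % 3 = 1 ∨ l.name % 3 = 2 := by
        intro l hl
        rw [heqv] at hl
        obtain ⟨x, _, rfl⟩ := Finset.mem_image.mp hl
        rw [g23_class]; split <;> simp
      have ha₁ : ∀ l ∈ a₁, l.name % 3 = 0 := by
        intro l hl
        have h1' := hmemu l (Finset.mem_union_left _ hl)
        have h2' := ha₀ l (Finset.mem_union_left _ hl)
        omega
      have hb₁ : ∀ l ∈ b₁, l.name % 3 = 1 := by
        intro l hl
        have h1' := hmemu l (Finset.mem_union_right _ hl)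
        have h2' := hmemv (Label.bar l)
          (Finset.mem_union_left _ (Finset.mem_image_of_mem _ hl))
        rw [name_bar] at h2'
        omega
      have hc₁ : ∀ l ∈ c₁, l.name % 3 = 2 := by
        intro l hl
        have h1' := hmemv l (Finset.mem_union_right _ hl)
        have h2' := ha₀ l (Finset.mem_union_right _ hl)
        omega
      -- split u and v by parity
      set uA := u.filter (fun l => l.name % 2 = 0) with huAdef
      set uB := u.filter (fun l => ¬ l.name % 2 = 0) with huBdef
      set vB := v.filter (fun l => l.name % 2 = 0) with hvBdef
      set vC := v.filter (fun l => ¬ l.name % 2 = 0) with hvCdef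
      have hEvuA : Ev uA := fun l hl => (Finset.mem_filter.mp hl).2
      have hOduB : Od uB := fun l hl => by
        have := (Finset.mem_filter.mp hl).2; omega
      have hEvvB : Ev vB := fun l hl => (Finset.mem_filter.mp hl).2
      have hOdvC : Od vC := fun l hl => by
        have := (Finset.mem_filter.mp hl).2; omega
      have hq12 : ∀ l : Label, (lmap g12 l).name % 3 = 0 ↔ l.name % 2 = 0 := by
        intro l; rw [g12_class]; by_cases hp : l.name % 2 = 0 <;> simp [hp]
      have hq12' : ∀ l : Label, (lmap g12 l).name % 3 = 1 ↔ ¬ l.name % 2 = 0 := by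
        intro l; rw [g12_class]; by_cases hp : l.name % 2 = 0 <;> simp [hp]
      have hq23 : ∀ l : Label, (lmap g23 l).name % 3 = 1 ↔ l.name % 2 = 0 := by
        intro l; rw [g23_class]; by_cases hp : l.name % 2 = 0 <;> simp [hp]
      have hq23' : ∀ l : Label, (lmap g23 l).name % 3 = 2 ↔ ¬ l.name % 2 = 0 := by
        intro l; rw [g23_class]; by_cases hp : l.name % 2 = 0 <;> simp [hp]
      have huA : uA.image (lmap g12) = a₁ := by
        rw [huAdef, ← image_filter_class (p := fun l => l.name % 2 = 0) (q := fun l => l.name % 3 = 0) hq12, ← hequ,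
          filter_union_left ha₁ (fun l hl => by rw [hb₁ l hl]; omega)]
      have huB : uB.image (lmap g12) = b₁ := by
        rw [huBdef, ← image_filter_class (p := fun l => ¬ l.name % 2 = 0) (q := fun l => l.name % 3 = 1) hq12', ← hequ,
          filter_union_right (fun l hl => by rw [ha₁ l hl]; omega) hb₁]
      have hvB : vB.image (lmap g23) = b₁.image Label.bar := by
        rw [hvBdef, ← image_filter_class (p := fun l => l.name % 2 = 0) (q := fun l => l.name % 3 = 1) hq23, ← heqv,
          filter_union_left (class_bar hb₁) (fun l hl => by rw [hc₁ l hl]; omega)]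
      have hvC : vC.image (lmap g23) = c₁ := by
        rw [hvCdef, ← image_filter_class (p := fun l => ¬ l.name % 2 = 0) (q := fun l => l.name % 3 = 2) hq23', ← heqv,
          filter_union_right (fun l hl => by rw [class_bar hb₁ l hl]; omega) hc₁]
      have hvBsm : vB = uB.image sm := by
        apply Finset.image_injective (lmap_inj g23_inj)
        rw [hvB, ← huB, Finset.image_image, Finset.image_image]
        exact (Finset.image_congr (fun x hx => g23_sm_eq_bar_g12 (hOduB x hx))).symm
      refine ⟨P1', Q1', rfl, Or.inr (Or.inr ⟨uA, uB, vC, ?_, ?_, hEvuA, hOduB, hOdvC, ?_⟩)⟩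
      · rwa [huAdef, huBdef, Finset.filter_union_filter_not_eq]
      · rw [← hvBsm, hvBdef, hvCdef, Finset.filter_union_filter_not_eq]
        exact hQ
      · rw [← huA, ← hvC, onAction_union_ev_od hEvuA hOdvC]

lemma ev_subset_od {s t : Act} (hs : Ev s) (ht : Od t) (hsub : s ⊆ t) : s = ∅ := by
  rw [Finset.eq_empty_iff_forall_notMem]
  intro l hl
  have := hs l hl; have := ht l (hsub hl); omega

/-! ### Strong bisimulations and failures -/

def SB (Rel : Proc → Proc → Prop) : Prop :=
  ∀ ⦃P Q⦄, Rel P Q → ∀ a P', Step P a P' → ∃ Q', Step Q a Q' ∧ Rel P' Q'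

lemma SB.tauStar {Rel} (h : SB Rel) {P Q P'} (hR : Rel P Q) (ht : TauStar P P') :
    ∃ Q', TauStar Q Q' ∧ Rel P' Q' := by
  induction ht with
  | refl => exact ⟨Q, Relation.ReflTransGen.refl, hR⟩
  | tail _ hstep ih =>
      obtain ⟨Q', hQ', hR'⟩ := ih
      obtain ⟨Q'', hs, hR''⟩ := h hR' _ _ hstep
      exact ⟨Q'', hQ'.tail hs, hR''⟩

lemma SB.obs {Rel} (h : SB Rel) {P Q a P'} (hR : Rel P Q) (ho : Obs P a P') :
    ∃ Q', Obs Q a Q' ∧ Rel P' Q' := by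
  obtain ⟨P₁, P₂, ht1, hs, ht2⟩ := ho
  obtain ⟨Q₁, hQ1, hR1⟩ := h.tauStar hR ht1
  obtain ⟨Q₂, hQ2, hR2⟩ := h hR1 _ _ hs
  obtain ⟨Q₃, hQ3, hR3⟩ := h.tauStar hR2 ht2
  exact ⟨Q₃, ⟨Q₁, Q₂, hQ1, hQ2, hQ3⟩, hR3⟩

lemma SB.obsSeq {Rel} (h : SB Rel) {P s P'} (ho : ObsSeq P s P') :
    ∀ {Q}, Rel P Q → ∃ Q', ObsSeq Q s Q' ∧ Rel P' Q' := by
  induction ho with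
  | nil ht =>
      intro Q hR
      obtain ⟨Q', h1, h2⟩ := h.tauStar hR ht
      exact ⟨Q', .nil h1, h2⟩
  | cons hobs _ ih =>
      intro Q hR
      obtain ⟨Q₁, h1, hR1⟩ := h.obs hR hobs
      obtain ⟨Q', h2, hR2⟩ := ih hR1
      exact ⟨Q', .cons h1 h2, hR2⟩

lemma SB.failures_subset {Rel} (h : SB Rel) (h' : SB (fun x y => Rel y x)) {P Q}
    (hR : Rel P Q) : failures P ⊆ failures Q := by
  rintro ⟨s, X⟩ ⟨h1, h2, Pf, hseq, href⟩
  refine ⟨h1, h2, ?_⟩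
  obtain ⟨Qf, hseq', hRf⟩ := h.obsSeq hseq hR
  refine ⟨Qf, hseq', fun a ha hex => ?_⟩
  obtain ⟨R', hobs⟩ := hex
  obtain ⟨R'', hobs', -⟩ := SB.obs h' hRf hobs
  exact href a ha ⟨R'', hobs'⟩

/-! ### Transfer of steps across re-association -/

lemma assocLR {P Q R : Proc} {a : Act} {W : Proc}
    (h : Step (comp (comp P Q) R) a W) :
    ∃ P' Q' R', W = comp (comp P' Q') R' ∧
      Step (comp P (comp Q R)) a (comp P' (comp Q' R')) := by
  obtain ⟨X, R₁, rfl, hC⟩ := step_comp_inv h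
  rcases hC with ⟨u, hPQ, rfl, hEv, ha⟩ | ⟨v, hRst, rfl, hOd, ha⟩ |
    ⟨u, b, v, hPQ, hRst, hEv, hOdb, hOdv, ha⟩
  · -- only the composite of P and Q moves, with an even action
    obtain ⟨P', Q', rfl, hC2⟩ := step_comp_inv hPQ
    rcases hC2 with ⟨u₁, hP, rfl, hEv₁, hu⟩ | ⟨v₁, hQ, rfl, hOd₁, hu⟩ |
      ⟨u₁, b₁, v₁, hP, hQ, hEv₁, hOdb₁, hOdv₁, hu⟩
    · -- P alone
      exact ⟨P', Q', R₁, rfl,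
        cstep_to_step (Or.inl ⟨u₁, hP, rfl, hEv₁, ha.trans hu⟩)⟩
    · -- Q alone: its action is both even and odd, hence empty
      have hv : v₁ = ∅ :=
        od_subset_ev hOd₁ hEv (by rw [hu])
      subst hv
      refine ⟨P', Q', R₁, rfl, cstep_to_step (Or.inr (Or.inl
        ⟨∅, ?_, rfl, Od.empty, ha.trans hu⟩))⟩
      exact cstep_to_step (Or.inl ⟨∅, hQ, rfl, Ev.empty, rfl⟩)
    · -- P and Q synchronize; Q's visible (odd) part must be empty
      have hv : v₁ = ∅ :=
        od_subset_ev hOdv₁ hEv (by rw [hu]; exact Finset.subset_union_right)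
      subst hv
      refine ⟨P', Q', R₁, rfl, cstep_to_step (Or.inr (Or.inr
        ⟨u₁, b₁, ∅, hP, ?_, hEv₁, hOdb₁, Od.empty, ha.trans hu⟩))⟩
      exact cstep_to_step (Or.inl ⟨_, hQ, rfl,
        Ev.union (Od.sm_image hOdb₁) Ev.empty, rfl⟩)
  · -- R alone
    exact ⟨P, Q, R₁, rfl, cstep_to_step (Or.inr (Or.inl ⟨v,
      cstep_to_step (Or.inr (Or.inl ⟨v, hRst, rfl, hOd, rfl⟩)), rfl, hOd, ha⟩))⟩
  · -- the composite of P, Q synchronizes with R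
    obtain ⟨P', Q', rfl, hC2⟩ := step_comp_inv hPQ
    rcases hC2 with ⟨u₁, hP, rfl, hEv₁, hu⟩ | ⟨v₁, hQ, rfl, hOd₁, hu⟩ |
      ⟨u₁, b₁, v₁, hP, hQ, hEv₁, hOdb₁, hOdv₁, hu⟩
    · -- P and R move, Q does not: the sync part b is empty
      have hb : b = ∅ :=
        od_subset_ev hOdb hEv₁ (by rw [← hu]; exact Finset.subset_union_right)
      subst hb
      refine ⟨P', Q', R₁, rfl, cstep_to_step (Or.inr (Or.inr
        ⟨u, ∅, v, ?_, ?_, hEv, Od.empty, hOdv, ha⟩))⟩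
      · rw [hu]; exact hP
      · exact cstep_to_step (Or.inr (Or.inl ⟨_, hRst, rfl,
          Od.union (by rw [Finset.image_empty]; exact Od.empty) hOdv, rfl⟩))
    · -- Q and R move, P does not: u = ∅
      have hue : u = ∅ :=
        ev_subset_od hEv hOd₁ (by rw [← hu]; exact Finset.subset_union_left)
      subst hue
      have hb : b = v₁ := by rw [← hu, Finset.empty_union]
      have hQb : Step Q b Q' := by rw [hb]; exact hQ
      refine ⟨P', Q', R₁, rfl, cstep_to_step (Or.inr (Or.inl
        ⟨v, ?_, rfl, hOdv, by rw [ha, Finset.empty_union]⟩))⟩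
      exact cstep_to_step (Or.inr (Or.inr ⟨∅, b, v,
        by rw [Finset.empty_union]; exact hQb, hRst, Ev.empty,
        by rw [hb]; exact hOd₁, hOdv, (Finset.empty_union v).symm⟩))
    · -- all three move
      obtain ⟨huu, hbv⟩ := parity_split hEv hOdb hEv₁ hOdv₁ hu
      refine ⟨P', Q', R₁, rfl, cstep_to_step (Or.inr (Or.inr
        ⟨u₁, b₁, v, hP, ?_, hEv₁, hOdb₁, hOdv, by rw [ha, huu]⟩))⟩
      exact cstep_to_step (Or.inr (Or.inr ⟨b₁.image sm, v₁, v, hQ,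
        by rw [← hbv]; exact hRst, Od.sm_image hOdb₁, hOdv₁, hOdv, rfl⟩))

lemma assocRL {P Q R : Proc} {a : Act} {W : Proc}
    (h : Step (comp P (comp Q R)) a W) :
    ∃ P' Q' R', W = comp P' (comp Q' R') ∧
      Step (comp (comp P Q) R) a (comp (comp P' Q') R') := by
  obtain ⟨P₁, Y, rfl, hC⟩ := step_comp_inv h
  rcases hC with ⟨u, hP, rfl, hEv, ha⟩ | ⟨v, hQR, rfl, hOd, ha⟩ |
    ⟨u, b, v, hP, hQR, hEv, hOdb, hOdv, ha⟩
  · -- P alone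
    exact ⟨P₁, Q, R, rfl, cstep_to_step (Or.inl ⟨u,
      cstep_to_step (Or.inl ⟨u, hP, rfl, hEv, rfl⟩), rfl, hEv, ha⟩)⟩
  · -- the composite of Q, R moves alone, with an odd action
    obtain ⟨Q₁, R₁, rfl, hC2⟩ := step_comp_inv hQR
    rcases hC2 with ⟨w, hQ, rfl, hEvw, hv⟩ | ⟨w, hRst, rfl, hOdw, hv⟩ |
      ⟨u₁, b₁, v₁, hQ, hRst, hEv₁, hOdb₁, hOdv₁, hv⟩
    · -- Q alone: action both odd and even, hence empty
      have hw : w = ∅ :=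
        od_subset_ev (hv ▸ hOd) hEvw (Finset.Subset.refl _)
      subst hw
      exact ⟨P₁, Q₁, R₁, rfl, cstep_to_step (Or.inl ⟨∅,
        cstep_to_step (Or.inr (Or.inl ⟨∅, hQ, rfl, Od.empty, rfl⟩)),
        rfl, Ev.empty, ha.trans hv⟩)⟩
    · -- R alone
      exact ⟨P₁, Q₁, R₁, rfl, cstep_to_step (Or.inr (Or.inl
        ⟨w, hRst, rfl, hOdw, ha.trans hv⟩))⟩
    · -- Q and R synchronize; Q's visible (even) part u₁ must be empty
      have hu₁ : u₁ = ∅ :=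
        ev_subset_od hEv₁ hOd (by rw [hv]; exact Finset.subset_union_left)
      subst hu₁
      refine ⟨P₁, Q₁, R₁, rfl, cstep_to_step (Or.inr (Or.inr
        ⟨∅, b₁, v₁, ?_, hRst, Ev.empty, hOdb₁, hOdv₁, by rw [ha, hv]⟩))⟩
      exact cstep_to_step (Or.inr (Or.inl ⟨∅ ∪ b₁, hQ, rfl,
        Od.union Od.empty hOdb₁, rfl⟩))
  · -- P synchronizes with the composite of Q, R
    obtain ⟨Q₁, R₁, rfl, hC2⟩ := step_comp_inv hQR
    rcases hC2 with ⟨w, hQ, rfl, hEvw, hv⟩ | ⟨w, hRst, rfl, hOdw, hv⟩ |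
      ⟨u₁, b₁, v₁, hQ, hRst, hEv₁, hOdb₁, hOdv₁, hv⟩
    · -- only Q moves inside: v = ∅
      have hv0 : v = ∅ :=
        od_subset_ev hOdv hEvw (by rw [← hv]; exact Finset.subset_union_right)
      subst hv0
      refine ⟨P₁, Q₁, R₁, rfl, cstep_to_step (Or.inl
        ⟨u ∪ ∅, ?_, rfl, Ev.union hEv Ev.empty, ha⟩)⟩
      exact cstep_to_step (Or.inr (Or.inr ⟨u, b, ∅, hP,
        by rw [hv]; exact hQ, hEv, hOdb, Od.empty, rfl⟩))
    · -- only R moves inside: b = ∅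
      have hb0 : b.image sm = ∅ :=
        ev_subset_od (Od.sm_image hOdb) hOdw (by rw [← hv]; exact Finset.subset_union_left)
      have hb : b = ∅ := Finset.image_eq_empty.mp hb0
      subst hb
      refine ⟨P₁, Q₁, R₁, rfl, cstep_to_step (Or.inr (Or.inr
        ⟨u, ∅, v, ?_, ?_, hEv, Od.empty, hOdv, ha⟩))⟩
      · exact cstep_to_step (Or.inl ⟨u ∪ ∅, hP, rfl, Ev.union hEv Ev.empty, rfl⟩)
      · rw [hv]; exact hRst
    · -- all three move
      obtain ⟨hbu, hvv⟩ := parity_split (Od.sm_image hOdb) hOdv hEv₁ hOdv₁ hv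
      refine ⟨P₁, Q₁, R₁, rfl, cstep_to_step (Or.inr (Or.inr
        ⟨u, b₁, v₁, ?_, hRst, hEv, hOdb₁, hOdv₁, by rw [ha, hvv]⟩))⟩
      exact cstep_to_step (Or.inr (Or.inr ⟨u, b, b₁, hP,
        by rw [hbu]; exact hQ, hEv, hOdb, hOdb₁, rfl⟩))

/-- The re-association relation. -/
def ARel (X Y : Proc) : Prop :=
  ∃ P Q R, X = comp (comp P Q) R ∧ Y = comp P (comp Q R)

lemma assoc_sb : SB ARel := by
  rintro X Y ⟨P, Q, R, rfl, rfl⟩ a X' hs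
  obtain ⟨P', Q', R', rfl, hstep⟩ := assocLR hs
  exact ⟨_, hstep, P', Q', R', rfl, rfl⟩

lemma assoc_sb' : SB (fun x y => ARel y x) := by
  rintro X Y ⟨P, Q, R, rfl, rfl⟩ a X' hs
  obtain ⟨P', Q', R', rfl, hstep⟩ := assocRL hs
  exact ⟨_, hstep, P', Q', R', rfl, rfl⟩

end CompAssoc

/-- **Composition of processes is associative up to failures equivalence.** -/
theorem comp_assoc_failures (P Q R : Proc) :
    FailEq (comp (comp P Q) R) (comp P (comp Q R)) := by
  have hR : CompAssoc.ARel (comp (comp P Q) R) (comp P (comp Q R)) := ⟨P, Q, R, rfl, rfl⟩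
  exact Set.Subset.antisymm
    (CompAssoc.SB.failures_subset CompAssoc.assoc_sb CompAssoc.assoc_sb' hR)
    (CompAssoc.SB.failures_subset CompAssoc.assoc_sb' CompAssoc.assoc_sb hR)
end
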